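/- The critical points of the map F|Ω (where F(v₁,…,v_{n−1}) = (|v₁|, |v₂−v₁|, …, |v_{n−1}|)) are exactly the tuples (v₁,…,v_{n−1}) ∈ Ω for which the vectors v₁,…,v_{n−1} ∈ ℝ^d are collinear. -/

import Mathlib

open scoped RealInnerProductSpace


/-- The map `F : (ℝ^d)^{n−1} → ℝⁿ`,
`F(v₁,…,v_{n−1}) = (|v₁|, |v₂−v₁|, …, |v_{n−1}−v_{n−2}|, |v_{n−1}|)`,
written via the convention `v_0 = v_n = 0` (indices shifted to start at `0`). -/
noncomputable def Fmap (d n : ℕ) (v : Fin (n - 1) → EuclideanSpace ℝ (Fin d)) :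
    Fin n → ℝ := fun j =>
  let V : ℤ → EuclideanSpace ℝ (Fin d) := fun k =>
    if h : 0 ≤ k ∧ k < (n : ℤ) - 1 then v ⟨k.toNat, by omega⟩ else 0
  ‖V (j : ℤ) - V ((j : ℤ) - 1)‖

noncomputable section

variable {E : Type*} [NormedAddCommGroup E] [InnerProductSpace ℝ E]

lemma hasFDerivAt_norm_of_ne {x : E} (hx : x ≠ 0) :
    HasFDerivAt (fun y : E => ‖y‖) (‖x‖⁻¹ • (innerSL ℝ x)) x := by
  have h1 : HasFDerivAt (fun y : E => ‖y‖ ^ 2) (2 • innerSL ℝ x) x :=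
    (hasStrictFDerivAt_norm_sq x).hasFDerivAt
  have hq : (‖x‖:ℝ) ^ 2 ≠ 0 := pow_ne_zero 2 (norm_ne_zero_iff.mpr hx)
  have h2 := (Real.hasDerivAt_sqrt hq).comp_hasFDerivAt x h1
  rw [show ((fun x => Real.sqrt x) ∘ fun y : E => ‖y‖ ^ 2) = fun y : E => ‖y‖ from funext fun y => Real.sqrt_sq (norm_nonneg y)] at h2
  refine h2.congr_fderiv ?_
  rw [Real.sqrt_sq (norm_nonneg x)]
  ext y
  simp only [ContinuousLinearMap.smul_apply, ContinuousLinearMap.coe_smul',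
    Pi.smul_apply, smul_eq_mul]
  have : ‖x‖ ≠ 0 := norm_ne_zero_iff.mpr hx
  field_simp
  ring

end

noncomputable def Pc (d n : ℕ) (k : ℤ) :
    ((Fin (n-1) → EuclideanSpace ℝ (Fin d)) →L[ℝ] EuclideanSpace ℝ (Fin d)) :=
  if h : 0 ≤ k ∧ k < (n:ℤ) - 1 then ContinuousLinearMap.proj ⟨k.toNat, by omega⟩ else 0

noncomputable def Ac (d n : ℕ) (k : ℤ) :
    ((Fin (n-1) → EuclideanSpace ℝ (Fin d)) →L[ℝ] EuclideanSpace ℝ (Fin d)) :=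
  Pc d n k - Pc d n (k-1)

lemma Pc_apply_pos (d n : ℕ) {k : ℤ} (h : 0 ≤ k ∧ k < (n:ℤ) - 1)
    (x : Fin (n-1) → EuclideanSpace ℝ (Fin d)) :
    Pc d n k x = x ⟨k.toNat, by omega⟩ := by
  simp [Pc, dif_pos h]

lemma Pc_apply_neg (d n : ℕ) {k : ℤ} (h : ¬ (0 ≤ k ∧ k < (n:ℤ) - 1))
    (x : Fin (n-1) → EuclideanSpace ℝ (Fin d)) :
    Pc d n k x = 0 := by
  simp [Pc, dif_neg h]

lemma Fmap_eq (d n : ℕ) (v : Fin (n - 1) → EuclideanSpace ℝ (Fin d)) (j : Fin n) :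
    Fmap d n v j = ‖Ac d n (j:ℤ) v‖ := by
  simp only [Fmap, Ac, Pc, ContinuousLinearMap.sub_apply]
  congr 1 <;> (split_ifs with h <;> simp)

noncomputable def Dmap (d n : ℕ) (v : Fin (n - 1) → EuclideanSpace ℝ (Fin d)) :
    (Fin (n-1) → EuclideanSpace ℝ (Fin d)) →L[ℝ] (Fin n → ℝ) :=
  ContinuousLinearMap.pi fun j =>
    ((‖Ac d n (j:ℤ) v‖⁻¹ • innerSL ℝ (Ac d n (j:ℤ) v)).comp (Ac d n (j:ℤ)))

lemma hasFDerivAt_Fmap {d n : ℕ} {v : Fin (n - 1) → EuclideanSpace ℝ (Fin d)}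
    (hA : ∀ j : Fin n, Ac d n (j:ℤ) v ≠ 0) :
    HasFDerivAt (Fmap d n) (Dmap d n v) v := by
  rw [hasFDerivAt_pi']
  intro j
  have h1 := (hasFDerivAt_norm_of_ne (hA j)).comp v (Ac d n (j:ℤ)).hasFDerivAt
  have hfun : (fun y : EuclideanSpace ℝ (Fin d) => ‖y‖) ∘ (Ac d n (j:ℤ)) = fun x => Fmap d n x j := by
    funext x; simp [Function.comp, Fmap_eq]
  rw [hfun] at h1
  convert h1 using 1
  exact ContinuousLinearMap.proj_pi _ j


/-- The open set `Ω ⊆ (ℝ^d)^{n−1}` where `v₁ ≠ 0`, `v_j ≠ v_{j+1}` and `v_{n−1} ≠ 0`. -/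
def OmegaSet (d n : ℕ) (hn : 2 ≤ n) : Set (Fin (n - 1) → EuclideanSpace ℝ (Fin d)) :=
  {v | v ⟨0, by omega⟩ ≠ 0 ∧
       (∀ j : ℕ, (h : j + 1 < n - 1) → v ⟨j, by omega⟩ ≠ v ⟨j + 1, h⟩) ∧
       v ⟨n - 2, by omega⟩ ≠ 0}


lemma Dmap_apply (d n : ℕ) (v x : Fin (n - 1) → EuclideanSpace ℝ (Fin d)) (j : Fin n) :
    Dmap d n v x j =
      ‖Ac d n (j:ℤ) v‖⁻¹ * (inner ℝ (Ac d n (j:ℤ) v) (Ac d n (j:ℤ) x) : ℝ) := rfl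

lemma Ac_sum (d n : ℕ) (x : Fin (n - 1) → EuclideanSpace ℝ (Fin d)) :
    ∑ j : Fin n, Ac d n (j:ℤ) x = 0 := by
  have h := Finset.sum_range_sub (fun i : ℕ => Pc d n ((i:ℤ)-1) x) n
  have h2 : ∑ j : Fin n, Ac d n (j:ℤ) x
      = ∑ i ∈ Finset.range n, Ac d n (i:ℤ) x :=
    Fin.sum_univ_eq_sum_range (fun i : ℕ => Ac d n (i:ℤ) x) n
  rw [h2]
  have h3 : ∀ i ∈ Finset.range n, Ac d n (i:ℤ) x
      = Pc d n (((i+1:ℕ):ℤ)-1) x - Pc d n ((i:ℤ)-1) x := by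
    intro i _
    rw [Ac, ContinuousLinearMap.sub_apply]
    congr 2
    push_cast
    ring
  rw [Finset.sum_congr rfl h3, h]
  have e1 : Pc d n ((n:ℤ)-1) x = 0 := Pc_apply_neg d n (by omega) x
  have e2 : Pc d n (((0:ℕ):ℤ)-1) x = 0 := Pc_apply_neg d n (by omega) x
  rw [e1, e2, sub_zero]

lemma Ac_ne_zero {d n : ℕ} (hn : 2 ≤ n) {v : Fin (n - 1) → EuclideanSpace ℝ (Fin d)}
    (hv : v ∈ OmegaSet d n hn) (j : Fin n) : Ac d n (j:ℤ) v ≠ 0 := by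
  obtain ⟨h0, hmid, hlast⟩ := hv
  have hj := j.isLt
  rcases eq_or_ne (j:ℕ) 0 with he | he
  · have : Ac d n (j:ℤ) v = v ⟨0, by omega⟩ := by
      rw [Ac, ContinuousLinearMap.sub_apply,
        Pc_apply_pos d n (by omega : (0:ℤ) ≤ (j:ℕ) ∧ ((j:ℕ):ℤ) < (n:ℤ)-1),
        Pc_apply_neg d n (by omega : ¬((0:ℤ) ≤ ((j:ℕ):ℤ)-1 ∧ ((j:ℕ):ℤ)-1 < (n:ℤ)-1))]
      simp only [sub_zero]
      exact congrArg v (Fin.ext (show ((((j:ℕ):ℤ))).toNat = 0 by omega))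
    rw [this]; exact h0
  · rcases eq_or_ne (j:ℕ) (n-1) with he2 | he2
    · have : Ac d n (j:ℤ) v = - v ⟨n-2, by omega⟩ := by
        rw [Ac, ContinuousLinearMap.sub_apply,
          Pc_apply_neg d n (by omega : ¬((0:ℤ) ≤ ((j:ℕ):ℤ) ∧ ((j:ℕ):ℤ) < (n:ℤ)-1)),
          Pc_apply_pos d n (by omega : (0:ℤ) ≤ ((j:ℕ):ℤ)-1 ∧ ((j:ℕ):ℤ)-1 < (n:ℤ)-1)]
        simp only [zero_sub]
        exact neg_inj.mpr (congrArg v (Fin.ext (show ((((j:ℕ):ℤ))-1).toNat = n-2 by omega)))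
      rw [this, neg_ne_zero]; exact hlast
    · have hlt : (j:ℕ) < n - 1 := by omega
      have : Ac d n (j:ℤ) v = v ⟨(j:ℕ), by omega⟩ - v ⟨(j:ℕ)-1, by omega⟩ := by
        rw [Ac, ContinuousLinearMap.sub_apply,
          Pc_apply_pos d n (by omega : (0:ℤ) ≤ ((j:ℕ):ℤ) ∧ ((j:ℕ):ℤ) < (n:ℤ)-1),
          Pc_apply_pos d n (by omega : (0:ℤ) ≤ ((j:ℕ):ℤ)-1 ∧ ((j:ℕ):ℤ)-1 < (n:ℤ)-1)]
        exact congrArg₂ (fun a b => v a - v b)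
          (Fin.ext (show ((((j:ℕ):ℤ))).toNat = (j:ℕ) by omega))
          (Fin.ext (show ((((j:ℕ):ℤ))-1).toNat = (j:ℕ)-1 by omega))
      rw [this, sub_ne_zero]
      have h2 := hmid ((j:ℕ)-1) (by omega)
      have hje : (⟨(j:ℕ)-1+1, by omega⟩ : Fin (n-1)) = ⟨(j:ℕ), by omega⟩ :=
        Fin.ext (show (j:ℕ)-1+1 = (j:ℕ) by omega)
      rw [hje] at h2
      exact fun hc => h2 hc.symm


/-- A point `v ∈ Ω` is a critical point of `F|Ω` (i.e. the derivative of
`F` at `v` has rank `< n`, equivalently is not surjective onto `ℝⁿ`) if and only if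
the vectors `v₁,…,v_{n−1}` all lie on a common line through the origin. -/
theorem stmt_5 {d n : ℕ} (hd : 2 ≤ d) (hn : 2 ≤ n)
    (v : Fin (n - 1) → EuclideanSpace ℝ (Fin d)) (hv : v ∈ OmegaSet d n hn) :
    ¬ Function.Surjective (fderiv ℝ (Fmap d n) v) ↔
      ∃ w : EuclideanSpace ℝ (Fin d), ∀ i, ∃ c : ℝ, v i = c • w := by
  have hA : ∀ j : Fin n, Ac d n (j:ℤ) v ≠ 0 := Ac_ne_zero hn hv
  have hD : fderiv ℝ (Fmap d n) v = Dmap d n v := (hasFDerivAt_Fmap hA).fderiv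
  rw [hD]
  set u : Fin n → EuclideanSpace ℝ (Fin d) :=
    fun j => ‖Ac d n (j:ℤ) v‖⁻¹ • Ac d n (j:ℤ) v with hu
  have hunorm : ∀ j, ‖u j‖ = 1 := fun j => norm_smul_inv_norm (hA j)
  have hDapp : ∀ x (j : Fin n),
      Dmap d n v x j = ⟪u j, Ac d n (j:ℤ) x⟫ := by
    intro x j
    rw [Dmap_apply, hu]
    rw [real_inner_smul_left]
  have hus : ∀ j : Fin n, u j = ‖Ac d n (j:ℤ) v‖⁻¹ • Ac d n (j:ℤ) v := fun j => rfl
  clear_value u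
  constructor
  · -- critical → collinear
    intro hns
    have hlt : LinearMap.range (Dmap d n v).toLinearMap < ⊤ := by
      refine lt_top_iff_ne_top.mpr fun h => hns ?_
      exact LinearMap.range_eq_top.mp h
    obtain ⟨g, hg0, hbot⟩ :=
      Submodule.exists_dual_map_eq_bot_of_lt_top hlt inferInstance
    have hker : ∀ x, g (Dmap d n v x) = 0 := by
      intro x
      have hmem : g (Dmap d n v x) ∈
          Submodule.map g (LinearMap.range (Dmap d n v).toLinearMap) :=
        ⟨Dmap d n v x, ⟨x, rfl⟩, rfl⟩
      rw [hbot] at hmem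
      exact hmem
    set lam : Fin n → ℝ := fun j => g (Pi.single j 1) with hlamdef
    have hg : ∀ y : Fin n → ℝ, g y = ∑ j, y j * lam j := by
      intro y
      have hy : y = ∑ j, Pi.single j (y j) := (Finset.univ_sum_single y).symm
      conv_lhs => rw [hy]
      rw [map_sum]
      refine Finset.sum_congr rfl fun j _ => ?_
      have hsing : Pi.single j (y j) = y j • (Pi.single j 1 : Fin n → ℝ) := by
        rw [← Pi.single_smul, smul_eq_mul, mul_one]
      rw [hsing, map_smul, smul_eq_mul, hlamdef]
    have hlamne : ∃ j, lam j ≠ 0 := by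
      by_contra hall
      push_neg at hall
      apply hg0
      apply LinearMap.ext fun y => ?_
      rw [hg y]
      simp [hall]
    -- the consecutive relation
    have hrel : ∀ k : ℕ, (hk : k < n - 1) →
        lam ⟨k, by omega⟩ • u ⟨k, by omega⟩
          = lam ⟨k+1, by omega⟩ • u ⟨k+1, by omega⟩ := by
      intro k hk
      set a : Fin n := ⟨k, by omega⟩
      set b : Fin n := ⟨k+1, by omega⟩
      set κ : Fin (n-1) := ⟨k, hk⟩ with hκ
      have h3 : ∀ e : EuclideanSpace ℝ (Fin d),
          ⟪lam a • u a - lam b • u b, e⟫ = 0 := by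
        intro e
        have hPsingle : ∀ m : ℤ,
            Pc d n m (Pi.single κ e) = if m = (k:ℤ) then e else 0 := by
          intro m
          by_cases hm : 0 ≤ m ∧ m < (n:ℤ)-1
          · rw [Pc_apply_pos d n hm, Pi.single_apply]
            by_cases hmk : m = (k:ℤ)
            · rw [if_pos hmk, if_pos (Fin.ext (show m.toNat = k by omega))]
            · rw [if_neg hmk, if_neg]
              intro hc
              have hval : m.toNat = k := congrArg Fin.val hc
              omega
          · rw [Pc_apply_neg d n hm, if_neg (by omega)]
        have h4 := hker (Pi.single κ e)
        rw [hg] at h4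
        have h5 : ∀ j : Fin n, Dmap d n v (Pi.single κ e) j
            = (if (j:ℤ) = (k:ℤ) then ⟪u j, e⟫ else 0)
              - (if (j:ℤ) - 1 = (k:ℤ) then ⟪u j, e⟫ else 0) := by
          intro j
          rw [hDapp, Ac, ContinuousLinearMap.sub_apply, inner_sub_right,
            hPsingle, hPsingle]
          congr 1 <;> (split_ifs <;> simp)
        have h6 : (∑ j, Dmap d n v (Pi.single κ e) j * lam j)
            = lam a * ⟪u a, e⟫ - lam b * ⟪u b, e⟫ := by
          have hsplit : ∀ j : Fin n, Dmap d n v (Pi.single κ e) j * lam j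
              = (if j = a then lam a * ⟪u a, e⟫ else 0)
                - (if j = b then lam b * ⟪u b, e⟫ else 0) := by
            intro j
            rw [h5, sub_mul]
            congr 1
            · by_cases hj : j = a
              · subst hj
                rw [if_pos (rfl : a = a), if_pos (show ((a:ℕ):ℤ) = (k:ℤ) from rfl)]
                ring
              · rw [if_neg hj, if_neg, zero_mul]
                intro hc
                apply hj
                have hval : ((j:ℕ):ℤ) = (k:ℤ) := hc
                exact Fin.ext (show (j:ℕ) = k by omega)
            · by_cases hj : j = b
              · subst hj
                rw [if_pos (rfl : b = b), if_pos (show ((b:ℕ):ℤ) - 1 = (k:ℤ) by have hb : (b:ℕ) = k+1 := rfl; omega)]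
                ring
              · rw [if_neg hj, if_neg, zero_mul]
                intro hc
                apply hj
                have hval : ((j:ℕ):ℤ) - 1 = (k:ℤ) := hc
                exact Fin.ext (show (j:ℕ) = k+1 by omega)
          rw [Finset.sum_congr rfl fun j _ => hsplit j, Finset.sum_sub_distrib,
            Finset.sum_ite_eq' Finset.univ a (fun _ => lam a * ⟪u a, e⟫),
            Finset.sum_ite_eq' Finset.univ b (fun _ => lam b * ⟪u b, e⟫)]
          simp
        rw [h6] at h4
        rw [inner_sub_left, real_inner_smul_left, real_inner_smul_left]
        linarith
      have h7 := h3 (lam a • u a - lam b • u b)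
      rw [inner_self_eq_zero, sub_eq_zero] at h7
      exact h7
    -- chain up
    have h0n : 0 < n := by omega
    have hchain : ∀ m : ℕ, (hm : m < n) →
        lam ⟨m, hm⟩ • u ⟨m, hm⟩ = lam ⟨0, h0n⟩ • u ⟨0, h0n⟩ := by
      intro m
      induction m with
      | zero => intro hm; rfl
      | succ p ih =>
        intro hm
        have hp : p < n - 1 := by omega
        rw [← hrel p hp]
        exact ih (by omega)
    have habs : ∀ j : Fin n, |lam j| = |lam ⟨0, h0n⟩| := by
      intro j
      have := hchain (j:ℕ) j.isLt
      have hnorm := congrArg norm this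
      rw [norm_smul, norm_smul, hunorm, hunorm] at hnorm
      simpa using hnorm
    obtain ⟨j0, hj0⟩ := hlamne
    have hlam0 : lam ⟨0, h0n⟩ ≠ 0 := by
      have := habs j0
      intro hc
      rw [hc, abs_zero, abs_eq_zero] at this
      exact hj0 this
    have hlamall : ∀ j : Fin n, lam j ≠ 0 := by
      intro j hc
      have := habs j
      rw [hc, abs_zero] at this
      exact hlam0 (abs_eq_zero.mp this.symm)
    -- every Ac is a multiple of u 0
    have hAcu : ∀ j : Fin n, ∃ c : ℝ,
        Ac d n (j:ℤ) v = c • u ⟨0, h0n⟩ := by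
      intro j
      have hj := hchain (j:ℕ) j.isLt
      have hjj : (⟨(j:ℕ), j.isLt⟩ : Fin n) = j := rfl
      rw [hjj] at hj
      have huj : u j = ((lam ⟨0, h0n⟩) / lam j) • u ⟨0, h0n⟩ := by
        rw [div_eq_mul_inv, mul_comm, ← smul_smul, ← hj, smul_smul,
          inv_mul_cancel₀ (hlamall j), one_smul]
      refine ⟨‖Ac d n (j:ℤ) v‖ * ((lam ⟨0, h0n⟩) / lam j), ?_⟩
      have hAcueq : Ac d n (j:ℤ) v = ‖Ac d n (j:ℤ) v‖ • u j := by
        rw [hus j, smul_inv_smul₀ (norm_ne_zero_iff.mpr (hA j))]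
      conv_lhs => rw [hAcueq, huj]
      rw [smul_smul]
    refine ⟨u ⟨0, h0n⟩, ?_⟩
    have main : ∀ m : ℕ, (hm : m < n - 1) →
        ∃ c : ℝ, v ⟨m, hm⟩ = c • u ⟨0, h0n⟩ := by
      intro m
      induction m with
      | zero =>
        intro hm
        obtain ⟨c, hc⟩ := hAcu ⟨0, h0n⟩
        have hc' : Ac d n ((0:ℕ):ℤ) v = c • u ⟨0, h0n⟩ := hc
        refine ⟨c, ?_⟩
        rw [← hc', Ac, ContinuousLinearMap.sub_apply,
          Pc_apply_pos d n (show (0:ℤ) ≤ ((0:ℕ):ℤ) ∧ ((0:ℕ):ℤ) < (n:ℤ)-1 by omega),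
          Pc_apply_neg d n (show ¬((0:ℤ) ≤ ((0:ℕ):ℤ)-1 ∧ ((0:ℕ):ℤ)-1 < (n:ℤ)-1) by omega),
          sub_zero]
        exact congrArg v (Fin.ext (show (0:ℕ) = (((0:ℕ):ℤ)).toNat by omega))
      | succ p ih =>
        intro hm
        obtain ⟨c1, hc1⟩ := ih (by omega)
        obtain ⟨c2, hc2⟩ := hAcu ⟨p+1, by omega⟩
        have hc2' : Ac d n ((p+1:ℕ):ℤ) v = c2 • u ⟨0, h0n⟩ := hc2
        have hstep : Ac d n ((p+1:ℕ):ℤ) v = v ⟨p+1, hm⟩ - v ⟨p, by omega⟩ := by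
          rw [Ac, ContinuousLinearMap.sub_apply,
            Pc_apply_pos d n (show (0:ℤ) ≤ ((p+1:ℕ):ℤ) ∧ ((p+1:ℕ):ℤ) < (n:ℤ)-1 by omega),
            Pc_apply_pos d n (show (0:ℤ) ≤ ((p+1:ℕ):ℤ)-1 ∧ ((p+1:ℕ):ℤ)-1 < (n:ℤ)-1 by omega)]
          exact congrArg₂ (fun a b => v a - v b)
            (Fin.ext (show (((p+1:ℕ):ℤ)).toNat = p+1 by omega))
            (Fin.ext (show (((p+1:ℕ):ℤ)-1).toNat = p by omega))
        have : v ⟨p+1, hm⟩ = v ⟨p, by omega⟩ + Ac d n ((p+1:ℕ):ℤ) v := by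
          rw [hstep]; abel
        refine ⟨c1 + c2, ?_⟩
        rw [this, hc1, hc2', add_smul]
    intro i
    obtain ⟨c, hc⟩ := main (i:ℕ) i.isLt
    exact ⟨c, hc⟩
  · -- collinear → critical
    rintro ⟨w, hw⟩ hs
    have hw0 : w ≠ 0 := by
      rintro rfl
      obtain ⟨c, hc⟩ := hw ⟨0, by omega⟩
      exact hv.1 (by simpa using hc)
    have hPcw : ∀ k : ℤ, ∃ c : ℝ, Pc d n k v = c • w := by
      intro k
      by_cases h : 0 ≤ k ∧ k < (n:ℤ)-1
      · obtain ⟨c, hc⟩ := hw ⟨k.toNat, by omega⟩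
        exact ⟨c, by rw [Pc_apply_pos d n h]; exact hc⟩
      · exact ⟨0, by rw [Pc_apply_neg d n h, zero_smul]⟩
    have hu2 : ∀ j : Fin n, ∃ t : ℝ, u j = t • w := by
      intro j
      obtain ⟨c1, hc1⟩ := hPcw (j:ℤ)
      obtain ⟨c2, hc2⟩ := hPcw ((j:ℤ)-1)
      refine ⟨‖Ac d n (j:ℤ) v‖⁻¹ * (c1 - c2), ?_⟩
      rw [hus j, Ac, ContinuousLinearMap.sub_apply, hc1, hc2, ← sub_smul,
        smul_smul]
    have hkey : ∀ (j : Fin n) (x : EuclideanSpace ℝ (Fin d)),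
        ⟪u j, w⟫ * ⟪u j, x⟫ = ⟪w, x⟫ := by
      intro j x
      obtain ⟨t, ht⟩ := hu2 j
      have h1 : ‖t • w‖ = 1 := by rw [← ht]; exact hunorm j
      have h2 : t^2 * ‖w‖^2 = 1 := by
        have := congrArg (· ^ 2) h1
        simpa [norm_smul, mul_pow, sq_abs] using this
      rw [ht, real_inner_smul_left, real_inner_smul_left,
        real_inner_self_eq_norm_sq]
      calc t * ‖w‖^2 * (t * ⟪w, x⟫) = (t^2 * ‖w‖^2) * ⟪w, x⟫ := by ring
        _ = ⟪w, x⟫ := by rw [h2, one_mul]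
    set lam : Fin n → ℝ := fun j => ⟪u j, w⟫ with hlamdef
    have hker : ∀ x, ∑ j, lam j * Dmap d n v x j = 0 := by
      intro x
      have : ∀ j : Fin n, lam j * Dmap d n v x j = ⟪w, Ac d n (j:ℤ) x⟫ := by
        intro j
        rw [hDapp, hlamdef]
        exact hkey j (Ac d n (j:ℤ) x)
      rw [Finset.sum_congr rfl fun j _ => this j, ← inner_sum, Ac_sum,
        inner_zero_right]
    obtain ⟨x, hx⟩ := hs lam
    have hzero := hker x
    rw [show (Dmap d n v) x = lam from hx] at hzero
    have hall : ∀ j ∈ Finset.univ, lam j * lam j = 0 := by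
      refine (Finset.sum_eq_zero_iff_of_nonneg fun j _ => mul_self_nonneg _).mp hzero
    have h00 : 0 < n := by omega
    have := hall ⟨0, h00⟩ (Finset.mem_univ _)
    have hl0 : lam ⟨0, h00⟩ = 0 := by
      rcases mul_self_eq_zero.mp this with h
      exact h
    have := hkey ⟨0, h00⟩ w
    have hl0' : (inner ℝ (u ⟨0, h00⟩) w : ℝ) = 0 := hl0
    rw [hl0', zero_mul, real_inner_self_eq_norm_sq] at this
    have : ‖w‖^2 = 0 := this.symm
    exact hw0 (norm_eq_zero.mp (pow_eq_zero_iff (by norm_num)|>.mp this))
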